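/- Suppose G_1, …, G_m are finite subgraphs of the infinite path Path_ℤ with G_1 ∪ ⋯ ∪ G_m = Path_k and Δ⃗(G_1,…,G_m) = 1. Then there exists a set I ⊆ {1,…,m} containing m, with associated shift permutation σ = σ_I and induced shift permutations σ̃_j, such that λ⃗(G_{σ(1)},…,G_{σ(m)}) ≥ k/8 − (max_{j∈{1,…,m}} λ(G_j))/2, and Δ⃗(G_{σ̃_j(1)},…,G_{σ̃_j(m)}) ≥ Δ⃗(G_1,…,G_m)/2 for all j ∈ {1,…,m}. -/

import Mathlib

noncomputable section

/-- A finite subgraph of the infinite path `Path_ℤ`, identified with its (finite) edge set: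
the integer `i` encodes the edge `{i-1, i}` of `Path_ℤ`. -/
abbrev PGraph := Finset ℤ

/-- The connected component of the edge `i` in `G`: all edges `j ∈ G` such that every edge
lying between `i` and `j` also belongs to `G`. -/
def comp (G : PGraph) (i : ℤ) : PGraph :=
  G.filter fun j => ∀ l ∈ Finset.Icc (min i j) (max i j), l ∈ G

/-- `Δ(G)`: the number of connected components of `G`. -/
def Delta (G : PGraph) : ℕ := (G.filter fun i => i - 1 ∉ G).card

/-- `λ(G)`: the maximum number of edges of a connected component of `G`. -/
def lam (G : PGraph) : ℕ := G.sup fun i => (comp G i).card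

/-- `G ⊖ F`: the union of the connected components of `G` that are vertex-disjoint from `F`.
(The edges `{i-1,i}` and `{f-1,f}` share a vertex iff `|i - f| ≤ 1`.) -/
def ominus (G F : PGraph) : PGraph :=
  G.filter fun i => ∀ j ∈ comp G i, ∀ f ∈ F, 1 < (j - f).natAbs

/-- `Path_k`: the subgraph of `Path_ℤ` with edges `{i-1,i}` for `1 ≤ i ≤ k`. -/
def pathk (k : ℕ) : PGraph := Finset.Icc 1 (k : ℤ)

/-- `Δ⃗(G_1,…,G_m ∣ F)`. -/
def dvecFrom : PGraph → List PGraph → ℕ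
  | _, [] => 0
  | F, G :: L => Delta (ominus G F) + dvecFrom (F ∪ G) L

/-- `Δ⃗(G_1,…,G_m)`. -/
def dvec (L : List PGraph) : ℕ := dvecFrom ∅ L

def lvecFrom : PGraph → List PGraph → ℕ
  | _, [] => 0
  | F, G :: L => lam (ominus G F) + lvecFrom (F ∪ G) L

/-- `λ⃗(G_1,…,G_m)`. -/
def lvec (L : List PGraph) : ℕ := lvecFrom ∅ L

def ldvecFrom : PGraph → List PGraph → ℕ
  | _, [] => 0
  | F, G :: L => lam (ominus G F) * Delta (ominus G F) + ldvecFrom (F ∪ G) L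

/-- `λΔ⃗(G_1,…,G_m)`. -/
def ldvec (L : List PGraph) : ℕ := ldvecFrom ∅ L

/-- The sequence `G_1, …, G_m` as a list. -/
def seqList {m : ℕ} (G : Fin m → PGraph) : List PGraph := (List.finRange m).map G

/-- `G_1 ∪ ⋯ ∪ G_{j-1}` (the union of the entries strictly before `j`). -/
def unionBelow {m : ℕ} (G : Fin m → PGraph) (j : Fin m) : PGraph :=
  (Finset.univ.filter fun i => i < j).biUnion G

/-- A shift permutation: `σ(j) ≥ j - 1` for all `j`. -/
def IsShiftPerm {m : ℕ} (σ : Equiv.Perm (Fin m)) : Prop :=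
  ∀ j : Fin m, (j : ℕ) ≤ (σ j : ℕ) + 1

/-- The shift permutation `σ_I` (as a function) associated with a set `I` of indices
(0-indexed; in the intended use `I` contains the last index): `σ_I(j)` is the least element
of `I` that is `≥ j` when `j = 0` or `j - 1 ∈ I`, and `j - 1` otherwise. -/
def sigmaFun {m : ℕ} (I : Finset (Fin m)) (j : Fin m) : Fin m :=
  if (j : ℕ) = 0 ∨ ∃ i ∈ I, (i : ℕ) + 1 = (j : ℕ) then
    WithTop.untopD j (I.filter fun a => j ≤ a).min
  else ⟨(j : ℕ) - 1, lt_of_le_of_lt (Nat.sub_le _ 1) j.isLt⟩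

/-- The index set `Ĩ_j` of the induced shift permutation `σ̃_j`: if `j ∈ I`, add all indices
up to the predecessor of `j` in `I`; if `j ∉ I`, add all indices below `j`. -/
def tildeI {m : ℕ} (I : Finset (Fin m)) (j : Fin m) : Finset (Fin m) :=
  if j ∈ I then I ∪ Finset.univ.filter fun a => ∃ b ∈ I, b < j ∧ a ≤ b
  else I ∪ Finset.univ.filter fun a => a < j

/-- The induced shift permutation `σ̃_j := σ_{Ĩ_j}` (as a function). -/
def sigmaTilde {m : ℕ} (I : Finset (Fin m)) (j : Fin m) : Fin m → Fin m :=
  sigmaFun (tildeI I j)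

open Finset

lemma mem_comp' {A : PGraph} {i j : ℤ} :
    j ∈ comp A i ↔ j ∈ A ∧ ∀ l, ((i ≤ l ∧ l ≤ j) ∨ (j ≤ l ∧ l ≤ i)) → l ∈ A := by
  simp only [comp, mem_filter, mem_Icc, and_congr_right_iff]
  intro _
  constructor
  · intro h l hl
    exact h l (by omega)
  · intro h l h1
    exact h l (by omega)

lemma comp_subset {A : PGraph} {i : ℤ} : comp A i ⊆ A := filter_subset _ _

lemma mem_comp_self {A : PGraph} {i : ℤ} (h : i ∈ A) : i ∈ comp A i := by
  rw [mem_comp']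
  exact ⟨h, fun l hl => by have : l = i := by omega
                           rwa [this]⟩

lemma mem_comp_between {A : PGraph} {i x y z : ℤ} (hx : x ∈ comp A i) (hy : y ∈ comp A i)
    (h1 : x ≤ z) (h2 : z ≤ y) : z ∈ comp A i := by
  rw [mem_comp'] at hx hy ⊢
  have hzA : z ∈ A := by
    rcases le_total z i with h | h
    · exact hx.2 z (by omega)
    · exact hy.2 z (by omega)
  refine ⟨hzA, fun l hl => ?_⟩
  rcases le_total l i with h | h
  · exact hx.2 l (by omega)
  · exact hy.2 l (by omega)

lemma comp_trans {A : PGraph} {i j x : ℤ} (hx : x ∈ comp A j) (hj : j ∈ comp A i) :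
    x ∈ comp A i := by
  rw [mem_comp'] at hx hj ⊢
  refine ⟨hx.1, fun l hl => ?_⟩
  by_cases hc : (i ≤ l ∧ l ≤ j) ∨ (j ≤ l ∧ l ≤ i)
  · exact hj.2 l hc
  · exact hx.2 l (by omega)

lemma mem_comp_symm {A : PGraph} {i j : ℤ} (h : j ∈ comp A i) : i ∈ comp A j := by
  rw [mem_comp'] at h ⊢
  refine ⟨h.2 i (by omega), fun l hl => h.2 l (by omega)⟩

lemma comp_eq_of_mem {A : PGraph} {i j : ℤ} (h : j ∈ comp A i) : comp A j = comp A i := by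
  ext x
  exact ⟨fun hx => comp_trans hx h, fun hx => comp_trans hx (mem_comp_symm h)⟩

lemma comp_nonempty {A : PGraph} {i : ℤ} (h : i ∈ A) : (comp A i).Nonempty :=
  ⟨i, mem_comp_self h⟩

lemma comp_eq_Icc {A : PGraph} {i : ℤ} (h : i ∈ A) :
    comp A i = Icc ((comp A i).min' (comp_nonempty h)) ((comp A i).max' (comp_nonempty h)) := by
  apply Finset.Subset.antisymm
  · intro x hx
    rw [mem_Icc]
    exact ⟨min'_le _ _ hx, le_max' _ _ hx⟩
  · intro z hz
    rw [mem_Icc] at hz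
    exact mem_comp_between (min'_mem _ _) (max'_mem _ _) hz.1 hz.2

lemma card_comp {A : PGraph} {i : ℤ} (h : i ∈ A) :
    ((comp A i).card : ℤ) =
      (comp A i).max' (comp_nonempty h) - (comp A i).min' (comp_nonempty h) + 1 := by
  conv_lhs => rw [comp_eq_Icc h]
  rw [Int.card_Icc]
  have := Finset.min'_le _ _ (Finset.max'_mem (comp A i) (comp_nonempty h))
  omega

lemma Icc_subset_comp {A : PGraph} {a b i : ℤ} (hsub : Icc a b ⊆ A) (hi : i ∈ Icc a b) :
    Icc a b ⊆ comp A i := by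
  intro x hx
  rw [mem_Icc] at hi hx
  rw [mem_comp']
  exact ⟨hsub (by rw [mem_Icc]; omega), fun l hl => hsub (by rw [mem_Icc]; omega)⟩

lemma card_comp_le_lam {A : PGraph} {i : ℤ} (h : i ∈ A) : (comp A i).card ≤ lam A :=
  Finset.le_sup (f := fun i => (comp A i).card) h

lemma Delta_pos {A : PGraph} (h : A.Nonempty) : 1 ≤ Delta A := by
  rw [Nat.one_le_iff_ne_zero, ← Nat.pos_iff_ne_zero, Delta, Finset.card_pos]
  refine ⟨A.min' h, ?_⟩
  rw [mem_filter]
  refine ⟨min'_mem _ _, fun hc => ?_⟩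
  have := A.min'_le _ hc
  omega

lemma Delta_eq_zero_iff {A : PGraph} : Delta A = 0 ↔ A = ∅ := by
  constructor
  · intro h
    by_contra hne
    have := Delta_pos (Finset.nonempty_iff_ne_empty.2 hne)
    omega
  · intro h; simp [h, Delta]

lemma ominus_empty (A : PGraph) : ominus A ∅ = A := by
  simp [ominus]

lemma Delta_one_Icc {A : PGraph} (hne : A.Nonempty) (h : Delta A = 1) :
    A = Icc (A.min' hne) (A.max' hne) := by
  apply Finset.Subset.antisymm
  · intro x hx
    rw [mem_Icc]
    exact ⟨min'_le _ _ hx, le_max' _ _ hx⟩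
  · intro z hz
    rw [mem_Icc] at hz
    by_contra hzA
    have hBne : (A.filter fun x => z < x).Nonempty := by
      refine ⟨A.max' hne, ?_⟩
      rw [mem_filter]
      refine ⟨max'_mem _ _, lt_of_le_of_ne hz.2 ?_⟩
      intro hc; exact hzA (by rw [hc]; exact max'_mem _ _)
    set y := (A.filter fun x => z < x).min' hBne with hy
    have hyB := Finset.min'_mem _ hBne
    rw [mem_filter] at hyB
    have hy1 : y - 1 ∉ A := by
      intro hc
      rcases lt_trichotomy (y - 1) z with h1 | h1 | h1
      · have := hyB.2; omega
      · exact hzA (by rwa [← h1])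
      · have : y ≤ y - 1 := Finset.min'_le _ _ (by rw [mem_filter]; exact ⟨hc, h1⟩)
        omega
    have hmin1 : A.min' hne - 1 ∉ A := fun hc => by have := A.min'_le _ hc; omega
    have h2 : 2 ≤ Delta A := by
      rw [Delta]
      apply Finset.one_lt_card.2
      refine ⟨A.min' hne, ?_, y, ?_, ?_⟩
      · rw [mem_filter]; exact ⟨min'_mem _ _, hmin1⟩
      · rw [mem_filter]; exact ⟨hyB.1, hy1⟩
      · intro hc
        have h3 : z < y := hyB.2
        have h4 := hz.1
        omega
    omega

lemma unionBelow_zero {n : ℕ} (GG : Fin (n+1) → PGraph) : unionBelow GG 0 = ∅ := by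
  rw [Finset.eq_empty_iff_forall_notMem]
  intro x hx
  rw [unionBelow, Finset.mem_biUnion] at hx
  obtain ⟨i, hi, -⟩ := hx
  rw [Finset.mem_filter] at hi
  exact absurd hi.2 (Fin.not_lt_zero i)

lemma unionBelow_succ {n : ℕ} (GG : Fin (n+1) → PGraph) (j : Fin n) :
    unionBelow GG j.succ = GG 0 ∪ unionBelow (fun t => GG t.succ) j := by
  ext x
  simp only [unionBelow, Finset.mem_biUnion, Finset.mem_filter, Finset.mem_univ, true_and,
    Finset.mem_union]
  constructor
  · rintro ⟨i, hi, hx⟩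
    rcases Fin.eq_zero_or_eq_succ i with h0 | ⟨i', rfl⟩
    · subst h0; exact Or.inl hx
    · right; exact ⟨i', by rwa [Fin.succ_lt_succ_iff] at hi, hx⟩
  · rintro (hx | ⟨i', hi, hx⟩)
    · exact ⟨0, Fin.succ_pos j, hx⟩
    · exact ⟨i'.succ, Fin.succ_lt_succ_iff.2 hi, hx⟩

lemma dvecFrom_seq_eq_sum {n : ℕ} (GG : Fin n → PGraph) (F : PGraph) :
    dvecFrom F (seqList GG) = ∑ j, Delta (ominus (GG j) (F ∪ unionBelow GG j)) := by
  induction n generalizing F with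
  | zero => simp [seqList, dvecFrom]
  | succ n ih =>
    rw [seqList, List.finRange_succ, List.map_cons, List.map_map, Fin.sum_univ_succ]
    show Delta (ominus (GG 0) F) + dvecFrom (F ∪ GG 0) (seqList fun t => GG t.succ) = _
    congr 1
    · rw [unionBelow_zero]; rw [Finset.union_empty]
    · rw [ih (fun t => GG t.succ) (F ∪ GG 0)]
      apply Finset.sum_congr rfl
      intro j _
      rw [unionBelow_succ, Finset.union_assoc]

lemma lvecFrom_seq_eq_sum {n : ℕ} (GG : Fin n → PGraph) (F : PGraph) :
    lvecFrom F (seqList GG) = ∑ j, lam (ominus (GG j) (F ∪ unionBelow GG j)) := by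
  induction n generalizing F with
  | zero => simp [seqList, lvecFrom]
  | succ n ih =>
    rw [seqList, List.finRange_succ, List.map_cons, List.map_map, Fin.sum_univ_succ]
    show lam (ominus (GG 0) F) + lvecFrom (F ∪ GG 0) (seqList fun t => GG t.succ) = _
    congr 1
    · rw [unionBelow_zero]; rw [Finset.union_empty]
    · rw [ih (fun t => GG t.succ) (F ∪ GG 0)]
      apply Finset.sum_congr rfl
      intro j _
      rw [unionBelow_succ, Finset.union_assoc]

lemma dvec_eq_sum {n : ℕ} (GG : Fin n → PGraph) :
    dvec (seqList GG) = ∑ j, Delta (ominus (GG j) (unionBelow GG j)) := by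
  rw [dvec, dvecFrom_seq_eq_sum]
  simp [Finset.empty_union]

lemma lvec_eq_sum {n : ℕ} (GG : Fin n → PGraph) :
    lvec (seqList GG) = ∑ j, lam (ominus (GG j) (unionBelow GG j)) := by
  rw [lvec, lvecFrom_seq_eq_sum]
  simp [Finset.empty_union]

lemma sigmaFun_eq {m : ℕ} {I : Finset (Fin (m+1))} {j b : Fin (m+1)}
    (hcond : (j : ℕ) = 0 ∨ ∃ i ∈ I, (i:ℕ)+1 = (j:ℕ))
    (hb : b ∈ I) (hjb : j ≤ b) (hmin : ∀ x ∈ I, j ≤ x → b ≤ x) :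
    sigmaFun I j = b := by
  rw [sigmaFun, if_pos hcond]
  have hne : (I.filter fun a => j ≤ a).Nonempty := ⟨b, Finset.mem_filter.2 ⟨hb, hjb⟩⟩
  have h1 : (I.filter fun a => j ≤ a).min' hne = b := by
    apply le_antisymm
    · exact Finset.min'_le _ _ (Finset.mem_filter.2 ⟨hb, hjb⟩)
    · apply Finset.le_min'
      intro y hy
      rw [Finset.mem_filter] at hy
      exact hmin y hy.1 hy.2
  rw [← Finset.coe_min' hne, h1, WithTop.untopD_coe]

lemma sigmaFun_eq_pred {m : ℕ} {I : Finset (Fin (m+1))} {j : Fin (m+1)}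
    (h0 : (j:ℕ) ≠ 0) (hnI : ∀ i ∈ I, (i:ℕ)+1 ≠ (j:ℕ)) :
    sigmaFun I j = ⟨(j:ℕ)-1, lt_of_le_of_lt (Nat.sub_le _ 1) j.isLt⟩ := by
  rw [sigmaFun, if_neg]
  push_neg
  exact ⟨h0, hnI⟩

lemma sigmaFun_le {m : ℕ} {I : Finset (Fin (m+1))} {c j : Fin (m+1)}
    (hc : c ∈ I) (hj : j ≤ c) : sigmaFun I j ≤ c := by
  rw [sigmaFun]
  split
  · have hne : (I.filter fun a => j ≤ a).Nonempty := ⟨c, Finset.mem_filter.2 ⟨hc, hj⟩⟩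
    rw [← Finset.coe_min' hne, WithTop.untopD_coe]
    exact Finset.min'_le _ _ (Finset.mem_filter.2 ⟨hc, hj⟩)
  · rw [Fin.le_def] at hj ⊢
    simp only []
    omega

lemma sigmaFun_surj {m : ℕ} {I : Finset (Fin (m+1))} (hlast : Fin.last m ∈ I) :
    Function.Surjective (sigmaFun I) := by
  intro t
  by_cases ht : t ∈ I
  · by_cases hP : (I.filter fun x => x < t).Nonempty
    · set b := (I.filter fun x => x < t).max' hP with hbdef
      have hbmem := Finset.max'_mem _ hP
      rw [Finset.mem_filter] at hbmem
      have hbt : b < t := hbmem.2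
      have hblt : (b:ℕ)+1 < m+1 := by
        have := t.isLt
        rw [Fin.lt_def] at hbt
        omega
      refine ⟨⟨(b:ℕ)+1, hblt⟩, ?_⟩
      apply sigmaFun_eq
      · exact Or.inr ⟨b, hbmem.1, rfl⟩
      · exact ht
      · rw [Fin.le_def]
        simp only []
        rw [Fin.lt_def] at hbt
        omega
      · intro x hx hjx
        by_contra hc
        push_neg at hc
        have hxb : x ≤ b :=
          Finset.le_max' (I.filter fun y => y < t) x (Finset.mem_filter.2 ⟨hx, hc⟩)
        rw [Fin.le_def] at hjx hxb
        simp only [] at hjx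
        omega
    · refine ⟨0, ?_⟩
      apply sigmaFun_eq (Or.inl rfl) ht (Fin.zero_le t)
      intro x hx _
      by_contra hc
      push_neg at hc
      exact hP ⟨x, Finset.mem_filter.2 ⟨hx, hc⟩⟩
  · have htm : (t:ℕ) < m := by
      have hne : t ≠ Fin.last m := fun h => ht (h ▸ hlast)
      have h1 : (t:ℕ) ≠ m := fun h => hne (Fin.ext h)
      have := t.isLt
      omega
    refine ⟨⟨(t:ℕ)+1, by omega⟩, ?_⟩
    rw [sigmaFun_eq_pred]
    · apply Fin.ext; simp
    · simp
    · intro i hi hc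
      simp only [] at hc
      have : i = t := Fin.ext (by omega)
      exact ht (this ▸ hi)

lemma sigmaFun_inj {m : ℕ} {I : Finset (Fin (m+1))} (hlast : Fin.last m ∈ I) :
    Function.Injective (sigmaFun I) :=
  Finite.injective_iff_surjective.2 (sigmaFun_surj hlast)

lemma sigmaFun_image_Iic {m : ℕ} {I : Finset (Fin (m+1))} (hlast : Fin.last m ∈ I)
    {c : Fin (m+1)} (hc : c ∈ I) :
    (Finset.univ.filter fun t => t ≤ c).image (sigmaFun I) =
      Finset.univ.filter fun t => t ≤ c := by
  apply Finset.eq_of_subset_of_card_le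
  · intro x hx
    rw [Finset.mem_image] at hx
    obtain ⟨t, ht, rfl⟩ := hx
    rw [Finset.mem_filter] at ht ⊢
    exact ⟨Finset.mem_univ _, sigmaFun_le hc ht.2⟩
  · rw [Finset.card_image_of_injective _ (sigmaFun_inj hlast)]

lemma sigmaFun_zero {m : ℕ} {I : Finset (Fin (m+1))} (hne : I.Nonempty) :
    sigmaFun I 0 = I.min' hne :=
  sigmaFun_eq (Or.inl rfl) (Finset.min'_mem _ _) (Fin.zero_le _)
    (fun x hx _ => Finset.min'_le _ _ hx)

lemma unionBelow_sigma {m : ℕ} {G : Fin (m+1) → PGraph} {I : Finset (Fin (m+1))}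
    (hlast : Fin.last m ∈ I) {c : Fin (m+1)} (hc : c ∈ I) {p : Fin (m+1)}
    (hp : (p:ℕ) = (c:ℕ)+1) :
    unionBelow (fun a => G (sigmaFun I a)) p =
      (Finset.univ.filter fun t => t ≤ c).biUnion G := by
  rw [unionBelow]
  have h1 : (Finset.univ.filter fun i => i < p) = Finset.univ.filter fun t => t ≤ c := by
    ext t
    simp only [Finset.mem_filter, Finset.mem_univ, true_and, Fin.lt_def, Fin.le_def, hp]
    omega
  rw [h1]
  conv_rhs => rw [← sigmaFun_image_Iic hlast hc]
  rw [Finset.image_biUnion]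

lemma one_le_dvec {n : ℕ} (GG : Fin (n+1) → PGraph) (h : ∃ p, GG p ≠ ∅) :
    1 ≤ dvec (seqList GG) := by
  rw [dvec_eq_sum]
  have hne : (Finset.univ.filter fun t => GG t ≠ ∅).Nonempty := by
    obtain ⟨p, hp⟩ := h
    exact ⟨p, by simp [hp]⟩
  set q := (Finset.univ.filter fun t => GG t ≠ ∅).min' hne with hq
  have hqmem := Finset.min'_mem _ hne
  rw [Finset.mem_filter] at hqmem
  have hub : unionBelow GG q = ∅ := by
    rw [Finset.eq_empty_iff_forall_notMem]
    intro x hx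
    rw [unionBelow, Finset.mem_biUnion] at hx
    obtain ⟨i, hi, hxi⟩ := hx
    rw [Finset.mem_filter] at hi
    have hiq : ¬ (q ≤ i) := not_le.2 hi.2
    apply hiq
    apply Finset.min'_le
    rw [Finset.mem_filter]
    exact ⟨Finset.mem_univ _, fun he => by rw [he] at hxi; exact absurd hxi (Finset.notMem_empty x)⟩
  have h1 : 1 ≤ Delta (ominus (GG q) (unionBelow GG q)) := by
    rw [hub, ominus_empty]
    exact Delta_pos (Finset.nonempty_iff_ne_empty.2 hqmem.2)
  exact le_trans h1 (Finset.single_le_sum (f := fun i => Delta (ominus (GG i) (unionBelow GG i))) (fun i _ => Nat.zero_le _) (Finset.mem_univ q))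

lemma tildeI_last {m : ℕ} {I : Finset (Fin (m+1))} (hlast : Fin.last m ∈ I) (j : Fin (m+1)) :
    Fin.last m ∈ tildeI I j := by
  rw [tildeI]
  split <;> exact Finset.mem_union_left _ hlast

lemma one_le_dvec_tilde {m : ℕ} (G : Fin (m+1) → PGraph) (I : Finset (Fin (m+1)))
    (hlast : Fin.last m ∈ I) (hex : ∃ i, G i ≠ ∅) (j : Fin (m+1)) :
    1 ≤ dvec (seqList fun a => G (sigmaTilde I j a)) := by
  obtain ⟨i0, hi0⟩ := hex
  obtain ⟨a, ha⟩ := sigmaFun_surj (tildeI_last hlast j) i0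
  exact one_le_dvec _ ⟨a, by rw [sigmaTilde, ha]; exact hi0⟩

lemma rinj (c : ℤ) : Function.Injective fun y : ℤ => c - y := fun a b h => by
  simp only [] at h; omega

lemma rmem {c : ℤ} {A : PGraph} {x : ℤ} : x ∈ A.image (fun y => c - y) ↔ c - x ∈ A := by
  rw [Finset.mem_image]
  constructor
  · rintro ⟨y, hy, rfl⟩
    simpa [sub_sub_cancel] using hy
  · intro h
    exact ⟨c - x, h, by ring⟩

lemma comp_image' {c : ℤ} {A : PGraph} (z : ℤ) :
    comp (A.image fun y => c - y) z = (comp A (c - z)).image fun y => c - y := by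
  ext x
  rw [rmem, mem_comp', mem_comp', rmem]
  constructor
  · rintro ⟨h1, h2⟩
    refine ⟨h1, fun l hl => ?_⟩
    have h3 := h2 (c - l) (by omega)
    rw [rmem, sub_sub_cancel] at h3
    exact h3
  · rintro ⟨h1, h2⟩
    refine ⟨h1, fun l hl => ?_⟩
    rw [rmem]
    exact h2 (c - l) (by omega)

lemma max'_comp_succ_not_mem {A : PGraph} {i : ℤ} (h : i ∈ A) :
    (comp A i).max' (comp_nonempty h) + 1 ∉ A := by
  intro hc
  set M := (comp A i).max' (comp_nonempty h) with hM
  have hMc : M ∈ comp A i := Finset.max'_mem _ _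
  have hiM : i ≤ M := Finset.le_max' _ _ (mem_comp_self h)
  have hM1 : M + 1 ∈ comp A i := by
    rw [mem_comp'] at hMc ⊢
    refine ⟨hc, fun l hl => ?_⟩
    by_cases h2 : l = M + 1
    · rwa [h2]
    · exact hMc.2 l (by omega)
  have := Finset.le_max' _ _ hM1
  omega

lemma min'_comp_pred_not_mem {A : PGraph} {i : ℤ} (h : i ∈ A) :
    (comp A i).min' (comp_nonempty h) - 1 ∉ A := by
  intro hc
  set M := (comp A i).min' (comp_nonempty h) with hM
  have hMc : M ∈ comp A i := Finset.min'_mem _ _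
  have hiM : M ≤ i := Finset.min'_le _ _ (mem_comp_self h)
  have hM1 : M - 1 ∈ comp A i := by
    rw [mem_comp'] at hMc ⊢
    refine ⟨hc, fun l hl => ?_⟩
    by_cases h2 : l = M - 1
    · rwa [h2]
    · exact hMc.2 l (by omega)
  have := Finset.min'_le _ _ hM1
  omega

lemma min'_comp_eq {A : PGraph} {i : ℤ} (h : i ∈ A) (h1 : i - 1 ∉ A) :
    (comp A i).min' (comp_nonempty h) = i := by
  have hle := Finset.min'_le _ _ (mem_comp_self h)
  rcases eq_or_lt_of_le hle with he | hlt
  · exact he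
  · exfalso
    have : i - 1 ∈ comp A i :=
      mem_comp_between (Finset.min'_mem _ (comp_nonempty h)) (mem_comp_self h) (by omega) (by omega)
    exact h1 (comp_subset this)

lemma max'_comp_eq {A : PGraph} {i : ℤ} (h : i ∈ A) (h1 : i + 1 ∉ A) :
    (comp A i).max' (comp_nonempty h) = i := by
  have hle := Finset.le_max' _ _ (mem_comp_self h)
  rcases eq_or_lt_of_le hle with he | hlt
  · exact he.symm
  · exfalso
    have : i + 1 ∈ comp A i :=
      mem_comp_between (mem_comp_self h) (Finset.max'_mem _ (comp_nonempty h)) (by omega) (by omega)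
    exact h1 (comp_subset this)

lemma delta_rev {A : PGraph} : (A.filter fun i => i + 1 ∉ A).card = Delta A := by
  rw [Delta]
  apply Finset.card_bij' (i := fun a ha => (comp A a).min'
      (comp_nonempty (Finset.mem_of_mem_filter a ha)))
    (j := fun b hb => (comp A b).max' (comp_nonempty (Finset.mem_of_mem_filter b hb)))
  · intro a ha
    have haA := Finset.mem_of_mem_filter a ha
    have ha' := Finset.mem_filter.1 ha
    have hcc : comp A ((comp A a).min' (comp_nonempty haA)) = comp A a :=
      comp_eq_of_mem (Finset.min'_mem _ _)
    simp only [hcc]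
    exact max'_comp_eq haA ha'.2
  · intro b hb
    have hbA := Finset.mem_of_mem_filter b hb
    have hb' := Finset.mem_filter.1 hb
    have hcc : comp A ((comp A b).max' (comp_nonempty hbA)) = comp A b :=
      comp_eq_of_mem (Finset.max'_mem _ _)
    simp only [hcc]
    exact min'_comp_eq hbA hb'.2
  · intro a ha
    rw [Finset.mem_filter]
    have haA := Finset.mem_of_mem_filter a ha
    exact ⟨comp_subset (Finset.min'_mem _ _), min'_comp_pred_not_mem haA⟩
  · intro b hb
    rw [Finset.mem_filter]
    have hbA := Finset.mem_of_mem_filter b hb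
    exact ⟨comp_subset (Finset.max'_mem _ _), max'_comp_succ_not_mem hbA⟩


lemma delta_image {c : ℤ} {A : PGraph} : Delta (A.image fun y => c - y) = Delta A := by
  rw [Delta]
  have h1 : ((A.image fun y => c - y).filter fun i => i - 1 ∉ A.image fun y => c - y)
      = (A.filter fun i => i + 1 ∉ A).image fun y => c - y := by
    ext x
    rw [Finset.mem_filter, rmem, rmem, rmem]
    rw [Finset.mem_filter]
    constructor
    · rintro ⟨h1, h2⟩
      refine ⟨h1, fun hc => h2 ?_⟩
      have : c - (x - 1) = c - x + 1 := by ring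
      rwa [this]
    · rintro ⟨h1, h2⟩
      refine ⟨h1, fun hc => h2 ?_⟩
      have : c - (x - 1) = c - x + 1 := by ring
      rwa [this] at hc
  rw [h1, Finset.card_image_of_injective _ (rinj c), delta_rev]

lemma lam_image {c : ℤ} {A : PGraph} : lam (A.image fun y => c - y) = lam A := by
  rw [lam, lam, Finset.sup_image]
  apply Finset.sup_congr rfl
  intro i _
  show (comp (A.image fun y => c - y) ((fun y => c - y) i)).card = _
  rw [comp_image', sub_sub_cancel, Finset.card_image_of_injective _ (rinj c)]

lemma ominus_image {c : ℤ} {A F : PGraph} :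
    ominus (A.image fun y => c - y) (F.image fun y => c - y)
      = (ominus A F).image fun y => c - y := by
  ext z
  rw [rmem, ominus, ominus, Finset.mem_filter, Finset.mem_filter, rmem]
  constructor
  · rintro ⟨h1, h2⟩
    refine ⟨h1, fun e he f hf => ?_⟩
    have h3 := h2 (c - e) ?_ (c - f) ?_
    · have h4 : c - e - (c - f) = f - e := by ring
      rw [h4] at h3
      omega
    · rw [comp_image', rmem, sub_sub_cancel]
      exact he
    · rw [rmem, sub_sub_cancel]
      exact hf
  · rintro ⟨h1, h2⟩
    refine ⟨h1, fun e he f hf => ?_⟩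
    rw [comp_image'] at he
    rw [rmem] at he hf
    have h3 := h2 (c - e) he (c - f) hf
    have h4 : c - e - (c - f) = f - e := by ring
    omega

lemma dvecFrom_image {c : ℤ} (L : List PGraph) :
    ∀ F, dvecFrom (F.image fun y => c - y) (L.map fun A => A.image fun y => c - y)
      = dvecFrom F L := by
  induction L with
  | nil => intro F; rfl
  | cons A L ih =>
    intro F
    show Delta (ominus _ _) + _ = Delta (ominus A F) + _
    rw [ominus_image, delta_image, ← Finset.image_union, ih]

lemma lvecFrom_image {c : ℤ} (L : List PGraph) :
    ∀ F, lvecFrom (F.image fun y => c - y) (L.map fun A => A.image fun y => c - y)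
      = lvecFrom F L := by
  induction L with
  | nil => intro F; rfl
  | cons A L ih =>
    intro F
    show lam (ominus _ _) + _ = lam (ominus A F) + _
    rw [ominus_image, lam_image, ← Finset.image_union, ih]

lemma dvec_image {c : ℤ} (L : List PGraph) :
    dvec (L.map fun A => A.image fun y => c - y) = dvec L := by
  rw [dvec, dvec, ← dvecFrom_image (c := c) L ∅, Finset.image_empty]

lemma lvec_image {c : ℤ} (L : List PGraph) :
    lvec (L.map fun A => A.image fun y => c - y) = lvec L := by
  rw [lvec, lvec, ← lvecFrom_image (c := c) L ∅, Finset.image_empty]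

lemma maxd_mem {α : Type*} [LinearOrder α] {s : Finset α} (d : α) (h : s.Nonempty) :
    WithBot.unbotD d s.max ∈ s := by
  rw [← Finset.coe_max' h, WithBot.unbotD_coe]
  exact Finset.max'_mem _ _

lemma le_maxd {α : Type*} [LinearOrder α] {s : Finset α} (d : α) {x : α} (hx : x ∈ s) :
    x ≤ WithBot.unbotD d s.max := by
  rw [← Finset.coe_max' ⟨x, hx⟩, WithBot.unbotD_coe]
  exact Finset.le_max' _ _ hx

lemma mind_mem {α : Type*} [LinearOrder α] {s : Finset α} (d : α) (h : s.Nonempty) :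
    WithTop.untopD d s.min ∈ s := by
  rw [← Finset.coe_min' h, WithTop.untopD_coe]
  exact Finset.min'_mem _ _

lemma mind_le {α : Type*} [LinearOrder α] {s : Finset α} (d : α) {x : α} (hx : x ∈ s) :
    WithTop.untopD d s.min ≤ x := by
  rw [← Finset.coe_min' ⟨x, hx⟩, WithTop.untopD_coe]
  exact Finset.min'_le _ _ hx

def predF {m : ℕ} (a : Fin (m+1)) : Fin (m+1) := ⟨(a:ℕ) - 1, by have := a.isLt; omega⟩

def UleF {m : ℕ} (G : Fin (m+1) → PGraph) (j : Fin (m+1)) : PGraph :=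
  (Finset.univ.filter fun t => t ≤ j).biUnion G

def rEnd {m : ℕ} (G : Fin (m+1) → PGraph) (j : Fin (m+1)) : ℤ := WithBot.unbotD 0 (UleF G j).max

def lEnd {m : ℕ} (G : Fin (m+1) → PGraph) (a : Fin (m+1)) : ℤ :=
  WithTop.untopD 0 (comp (G a) (rEnd G a)).min

def incP {m : ℕ} (G : Fin (m+1) → PGraph) (t0 a : Fin (m+1)) : Prop :=
  t0 < a ∧ rEnd G (predF a) < rEnd G a

def pairSep {m : ℕ} (G : Fin (m+1) → PGraph) (S : Finset (Fin (m+1))) : Prop :=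
  ∀ a ∈ S, ∀ b ∈ S, a < b → (∀ x ∈ S, ¬(a < x ∧ x < b)) → rEnd G a + 2 ≤ lEnd G b

def totalC {m : ℕ} (G : Fin (m+1) → PGraph) (S : Finset (Fin (m+1))) : ℤ :=
  ∑ a ∈ S, (rEnd G a - lEnd G a + 1)

lemma mem_UleF {m : ℕ} {G : Fin (m+1) → PGraph} {j : Fin (m+1)} {x : ℤ} :
    x ∈ UleF G j ↔ ∃ i ≤ j, x ∈ G i := by
  simp [UleF, Finset.mem_biUnion]

lemma UleF_mono {m : ℕ} {G : Fin (m+1) → PGraph} {j j' : Fin (m+1)} (h : j ≤ j') :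
    UleF G j ⊆ UleF G j' := by
  intro x hx
  rw [mem_UleF] at hx ⊢
  obtain ⟨i, hi, hxi⟩ := hx
  exact ⟨i, le_trans hi h, hxi⟩

lemma chainLemma {m k : ℕ} {G : Fin (m+1) → PGraph} {t0 : Fin (m+1)}
    (hne : ∀ j, t0 ≤ j → (UleF G j).Nonempty)
    (hrlast : rEnd G (Fin.last m) = (k:ℤ))
    (htl : ∀ a, incP G t0 a → lEnd G a ≤ rEnd G (predF a) + 1) :
    ∀ (d : ℕ) (j : Fin (m+1)), t0 ≤ j → m - (j:ℕ) ≤ d →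
      ∃ S1 S2 : Finset (Fin (m+1)),
        (∀ a ∈ S1, incP G t0 a) ∧ (∀ a ∈ S2, incP G t0 a) ∧
        (∀ a ∈ S1, j < a) ∧ (∀ a ∈ S2, j < a) ∧
        pairSep G S1 ∧ pairSep G S2 ∧
        (∀ b ∈ S1, (∀ x ∈ S1, ¬ x < b) → rEnd G j < rEnd G b) ∧
        (∀ b ∈ S2, (∀ x ∈ S2, ¬ x < b) → rEnd G j + 2 ≤ lEnd G b) ∧
        (k:ℤ) - rEnd G j ≤ totalC G S1 + totalC G S2 := by
  classical
  have hmono : ∀ i i' : Fin (m+1), t0 ≤ i → i ≤ i' → rEnd G i ≤ rEnd G i' := by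
    intro i i' hi hii'
    exact le_maxd 0 (UleF_mono hii' (maxd_mem 0 (hne i hi)))
  have base : ∀ j : Fin (m+1), t0 ≤ j → (k:ℤ) ≤ rEnd G j →
      ∃ S1 S2 : Finset (Fin (m+1)),
        (∀ a ∈ S1, incP G t0 a) ∧ (∀ a ∈ S2, incP G t0 a) ∧
        (∀ a ∈ S1, j < a) ∧ (∀ a ∈ S2, j < a) ∧
        pairSep G S1 ∧ pairSep G S2 ∧
        (∀ b ∈ S1, (∀ x ∈ S1, ¬ x < b) → rEnd G j < rEnd G b) ∧
        (∀ b ∈ S2, (∀ x ∈ S2, ¬ x < b) → rEnd G j + 2 ≤ lEnd G b) ∧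
        (k:ℤ) - rEnd G j ≤ totalC G S1 + totalC G S2 := by
    intro j _ hrk
    refine ⟨∅, ∅, ?_, ?_, ?_, ?_, ?_, ?_, ?_, ?_, ?_⟩ <;>
      simp [pairSep, totalC]
    omega
  intro d
  induction d with
  | zero =>
    intro j hj hd
    have hjm : (j:ℕ) = m := by have := j.isLt; omega
    have hjl : j = Fin.last m := Fin.ext hjm
    exact base j hj (by rw [hjl, hrlast])
  | succ d ih =>
    intro j hj hd
    by_cases hrk : (k:ℤ) ≤ rEnd G j
    · exact base j hj hrk
    push_neg at hrk
    have htlast : t0 < Fin.last m := by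
      rcases lt_or_eq_of_le (Fin.le_last t0) with h | h
      · exact h
      · exfalso
        have hjlast : j = Fin.last m := le_antisymm (Fin.le_last j) (h ▸ hj)
        rw [hjlast, hrlast] at hrk
        omega
    have hAne : (Finset.univ.filter fun a => t0 < a ∧ rEnd G j < rEnd G a).Nonempty := by
      refine ⟨Fin.last m, ?_⟩
      rw [Finset.mem_filter]
      exact ⟨Finset.mem_univ _, htlast, by rw [hrlast]; exact hrk⟩
    set j2 := (Finset.univ.filter fun a => t0 < a ∧ rEnd G j < rEnd G a).min' hAne with hj2def
    have hj2 := Finset.min'_mem _ hAne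
    rw [Finset.mem_filter] at hj2
    have hj2t0 : t0 < j2 := hj2.2.1
    have hj2r : rEnd G j < rEnd G j2 := hj2.2.2
    have hpredlt : predF j2 < j2 := by
      rw [Fin.lt_def] at hj2t0 ⊢
      simp only [predF]
      omega
    have hpredt0 : t0 ≤ predF j2 := by
      rw [Fin.lt_def] at hj2t0
      rw [Fin.le_def]
      simp only [predF]
      omega
    have hrpred : rEnd G (predF j2) ≤ rEnd G j := by
      by_cases hc : t0 < predF j2 ∧ rEnd G j < rEnd G (predF j2)
      · exfalso
        have hmem : predF j2 ∈ Finset.univ.filter fun a => t0 < a ∧ rEnd G j < rEnd G a :=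
          Finset.mem_filter.2 ⟨Finset.mem_univ _, hc⟩
        have h5 : j2 ≤ predF j2 := Finset.min'_le _ (predF j2) hmem
        exact absurd hpredlt (not_lt.2 h5)
      · push_neg at hc
        rcases lt_or_eq_of_le hpredt0 with h | h
        · exact hc h
        · rw [← h]
          exact hmono t0 j (le_refl t0) hj
    have hincj2 : incP G t0 j2 := ⟨hj2t0, lt_of_le_of_lt hrpred hj2r⟩
    have hlj2 : lEnd G j2 ≤ rEnd G j + 1 := le_trans (htl j2 hincj2) (by omega)
    have hCne : (Finset.univ.filter fun a => incP G t0 a ∧ lEnd G a ≤ rEnd G j + 1).Nonempty :=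
      ⟨j2, Finset.mem_filter.2 ⟨Finset.mem_univ _, ⟨hincj2, hlj2⟩⟩⟩
    obtain ⟨c1, hc1mem, hc1max⟩ := Finset.exists_max_image _ (rEnd G) hCne
    rw [Finset.mem_filter] at hc1mem
    have hc1inc : incP G t0 c1 := hc1mem.2.1
    have hc1l : lEnd G c1 ≤ rEnd G j + 1 := hc1mem.2.2
    have hrc1 : rEnd G j < rEnd G c1 :=
      lt_of_lt_of_le hj2r (hc1max j2 (Finset.mem_filter.2 ⟨Finset.mem_univ _, ⟨hincj2, hlj2⟩⟩))
    have ht0c1 : t0 ≤ c1 := le_of_lt hc1inc.1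
    have hjc1 : j < c1 := by
      by_contra h
      push_neg at h
      exact absurd (hmono c1 j ht0c1 h) (not_le.2 hrc1)
    have hd' : m - (c1:ℕ) ≤ d := by
      rw [Fin.lt_def] at hjc1
      omega
    obtain ⟨T1, T2, hT1P, hT2P, hT1gt, hT2gt, hT1sep, hT2sep, hT1minr, hT2minl, hTtot⟩ :=
      ih c1 ht0c1 hd'
    have hc1nT2 : c1 ∉ T2 := fun hc => absurd (hT2gt c1 hc) (lt_irrefl c1)
    refine ⟨insert c1 T2, T1, ?_, hT1P, ?_, (fun a ha => lt_trans hjc1 (hT1gt a ha)), ?_,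
      hT1sep, ?_, ?_, ?_⟩
    · intro a ha
      rcases Finset.mem_insert.1 ha with rfl | ha'
      · exact hc1inc
      · exact hT2P a ha'
    · intro a ha
      rcases Finset.mem_insert.1 ha with rfl | ha'
      · exact hjc1
      · exact lt_trans hjc1 (hT2gt a ha')
    · -- pairSep (insert c1 T2)
      intro a ha b hb hab hbet
      rcases Finset.mem_insert.1 ha with rfl | ha'
      · rcases Finset.mem_insert.1 hb with rfl | hb'
        · exact absurd hab (lt_irrefl _)
        · exact hT2minl b hb' (fun x hx hxb =>
            hbet x (Finset.mem_insert_of_mem hx) ⟨hT2gt x hx, hxb⟩)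
      · rcases Finset.mem_insert.1 hb with rfl | hb'
        · exact absurd (lt_trans (hT2gt a ha') hab) (lt_irrefl _)
        · exact hT2sep a ha' b hb' hab (fun x hx => hbet x (Finset.mem_insert_of_mem hx))
    · -- minr of insert c1 T2 rel r j
      intro b hb hminb
      rcases Finset.mem_insert.1 hb with rfl | hb'
      · exact hrc1
      · exact absurd (hT2gt b hb') (hminb c1 (Finset.mem_insert_self _ _))
    · -- minsep of T1 rel r j
      intro b hb hminb
      have hrb := hT1minr b hb hminb
      by_contra hcon
      push_neg at hcon
      have hbc : b ∈ Finset.univ.filter fun a => incP G t0 a ∧ lEnd G a ≤ rEnd G j + 1 :=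
        Finset.mem_filter.2 ⟨Finset.mem_univ _, ⟨hT1P b hb, by omega⟩⟩
      exact absurd (hc1max b hbc) (not_le.2 hrb)
    · -- totals
      have hins : totalC G (insert c1 T2) = (rEnd G c1 - lEnd G c1 + 1) + totalC G T2 := by
        rw [totalC, totalC, Finset.sum_insert hc1nT2]
      have htot2 := hTtot
      rw [hins]
      linarith [hc1l, hrc1]

lemma countLemma {m : ℕ} {G : Fin (m+1) → PGraph} {t0 : Fin (m+1)}
    (hra : ∀ a, incP G t0 a → rEnd G a ∈ G a)
    (hIcc : ∀ a, incP G t0 a → comp (G a) (rEnd G a) = Finset.Icc (lEnd G a) (rEnd G a))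
    (hUle : ∀ a : Fin (m+1), t0 ≤ a → ∀ x ∈ UleF G a, x ≤ rEnd G a)
    (S : Finset (Fin (m+1))) (hP : ∀ a ∈ S, incP G t0 a) (hsep : pairSep G S) :
    totalC G S ≤ (lvec (seqList fun a => G (sigmaFun (S ∪ {Fin.last m}) a)) : ℤ) := by
  classical
  set I := S ∪ {Fin.last m} with hIdef
  have hlast : Fin.last m ∈ I := Finset.mem_union_right _ (Finset.mem_singleton_self _)
  rcases Finset.eq_empty_or_nonempty S with rfl | hSne
  · rw [totalC, Finset.sum_empty]
    positivity
  set σ := sigmaFun I with hσdef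
  have hIne : I.Nonempty := ⟨_, hlast⟩
  set amin := S.min' hSne with hamindef
  have haminS : amin ∈ S := Finset.min'_mem _ _
  have hminI : I.min' hIne = amin := by
    apply le_antisymm
    · exact Finset.min'_le _ _ (Finset.mem_union_left _ haminS)
    · apply Finset.le_min'
      intro y hy
      rcases Finset.mem_union.1 hy with hy' | hy'
      · exact Finset.min'_le _ _ hy'
      · rw [Finset.mem_singleton.1 hy']
        exact Fin.le_last _
  have hσ0 : σ 0 = amin := by rw [hσdef, sigmaFun_zero hIne, hminI]
  -- predecessor within I
  set predI := fun a : Fin (m+1) => WithBot.unbotD 0 (I.filter fun x => x < a).max with hpreddef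
  have hpredfacts : ∀ a ∈ S, a ≠ amin →
      predI a ∈ S ∧ predI a < a ∧ (∀ x ∈ I, x < a → x ≤ predI a) ∧ ((predI a : ℕ) + 1 ≤ m) := by
    intro a ha hne
    have hfne : (I.filter fun x => x < a).Nonempty := by
      refine ⟨amin, Finset.mem_filter.2 ⟨Finset.mem_union_left _ haminS, ?_⟩⟩
      exact lt_of_le_of_ne (Finset.min'_le _ _ ha) (fun h => hne h.symm)
    have hmem := maxd_mem 0 hfne
    rw [Finset.mem_filter] at hmem
    have hmax : ∀ x ∈ I, x < a → x ≤ predI a := fun x hx hxa =>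
      le_maxd 0 (Finset.mem_filter.2 ⟨hx, hxa⟩)
    have hpS : predI a ∈ S := by
      rcases Finset.mem_union.1 hmem.1 with h | h
      · exact h
      · exfalso
        rw [Finset.mem_singleton.1 h] at hmem
        exact absurd hmem.2 (not_lt.2 (Fin.le_last a))
    refine ⟨hpS, hmem.2, hmax, ?_⟩
    have h1 : (predI a : ℕ) < (a : ℕ) := hmem.2
    have h2 := a.isLt
    omega
  -- the position function
  set pos := fun a : Fin (m+1) =>
    if a = amin then (0 : Fin (m+1))
    else (⟨min ((predI a : ℕ) + 1) m, by omega⟩ : Fin (m+1)) with hposdef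
  have hposval : ∀ a ∈ S, a ≠ amin → (pos a : ℕ) = (predI a : ℕ) + 1 := by
    intro a ha hne
    obtain ⟨-, -, -, h4⟩ := hpredfacts a ha hne
    rw [hposdef]
    simp only [if_neg hne]
    exact min_eq_left h4
  have hσpos : ∀ a ∈ S, σ (pos a) = a := by
    intro a ha
    by_cases hne : a = amin
    · have hpos0 : pos a = 0 := by rw [hposdef]; simp [hne]
      rw [hpos0, hσ0, hne]
    · obtain ⟨hpS, hplt, hpmax, hple⟩ := hpredfacts a ha hne
      have hpI : predI a ∈ I := Finset.mem_union_left _ hpS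
      rw [hσdef]
      apply sigmaFun_eq
      · right
        exact ⟨predI a, hpI, (hposval a ha hne).symm⟩
      · exact Finset.mem_union_left _ ha
      · rw [Fin.le_def, hposval a ha hne]
        have : (predI a : ℕ) < (a : ℕ) := hplt
        omega
      · intro x hx hpx
        by_contra hc
        push_neg at hc
        have := hpmax x hx hc
        rw [Fin.le_def] at hpx this
        rw [hposval a ha hne] at hpx
        omega
  have hposinj : ∀ a ∈ S, ∀ b ∈ S, pos a = pos b → a = b := by
    intro a ha b hb h
    rw [← hσpos a ha, ← hσpos b hb, h]
  -- the key bound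
  have hbound : ∀ a ∈ S, rEnd G a - lEnd G a + 1 ≤
      (lam (ominus (G (σ (pos a))) (unionBelow (fun x => G (σ x)) (pos a))) : ℤ) := by
    intro a ha
    have hPa := hP a ha
    have hrGa := hra a hPa
    have hlr : lEnd G a ≤ rEnd G a := by
      have h1 := mem_comp_self hrGa
      rw [hIcc a hPa, Finset.mem_Icc] at h1
      exact h1.1
    have hcard : ((comp (G a) (rEnd G a)).card : ℤ) = rEnd G a - lEnd G a + 1 := by
      rw [hIcc a hPa, Int.card_Icc]
      omega
    rw [hσpos a ha]
    by_cases hne : a = amin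
    · have hpos0 : pos a = 0 := by rw [hposdef]; simp [hne]
      rw [hpos0, unionBelow_zero, ominus_empty]
      rw [← hcard]
      exact_mod_cast card_comp_le_lam hrGa
    · obtain ⟨hpS, hplt, hpmax, hple⟩ := hpredfacts a ha hne
      have hpI : predI a ∈ I := Finset.mem_union_left _ hpS
      have hub : unionBelow (fun x => G (σ x)) (pos a) = UleF G (predI a) := by
        rw [hσdef]
        exact unionBelow_sigma hlast hpI (hposval a ha hne)
      rw [hub]
      have hsepa : rEnd G (predI a) + 2 ≤ lEnd G a := by
        apply hsep (predI a) hpS a ha hplt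
        intro x hx ⟨h1, h2⟩
        exact absurd (hpmax x (Finset.mem_union_left _ hx) h2) (not_le.2 h1)
      have hfle : ∀ f ∈ UleF G (predI a), f ≤ rEnd G (predI a) :=
        hUle (predI a) (le_of_lt (hP _ hpS).1)
      have hCsub : comp (G a) (rEnd G a) ⊆ ominus (G a) (UleF G (predI a)) := by
        intro x hx
        rw [ominus, Finset.mem_filter]
        refine ⟨comp_subset hx, fun e he f hf => ?_⟩
        rw [comp_eq_of_mem hx] at he
        have hel : lEnd G a ≤ e := by
          rw [hIcc a hPa, Finset.mem_Icc] at he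
          exact he.1
        have hfr := hfle f hf
        omega
      have hrom : rEnd G a ∈ ominus (G a) (UleF G (predI a)) := hCsub (mem_comp_self hrGa)
      have hsub2 : comp (G a) (rEnd G a) ⊆ comp (ominus (G a) (UleF G (predI a))) (rEnd G a) := by
        rw [hIcc a hPa]
        apply Icc_subset_comp
        · rw [← hIcc a hPa]
          exact hCsub
        · rw [Finset.mem_Icc]
          exact ⟨hlr, le_refl _⟩
      calc rEnd G a - lEnd G a + 1 = ((comp (G a) (rEnd G a)).card : ℤ) := hcard.symm
        _ ≤ ((comp (ominus (G a) (UleF G (predI a))) (rEnd G a)).card : ℤ) := by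
            exact_mod_cast Finset.card_le_card hsub2
        _ ≤ (lam (ominus (G a) (UleF G (predI a))) : ℤ) := by
            exact_mod_cast card_comp_le_lam hrom
  -- assemble
  have hsum : totalC G S ≤ ∑ a ∈ S,
      (lam (ominus (G (σ (pos a))) (unionBelow (fun x => G (σ x)) (pos a))) : ℤ) := by
    rw [totalC]
    exact Finset.sum_le_sum hbound
  have himg : ∑ a ∈ S,
      (lam (ominus (G (σ (pos a))) (unionBelow (fun x => G (σ x)) (pos a))) : ℤ)
      = ∑ p ∈ S.image pos,
      (lam (ominus (G (σ p)) (unionBelow (fun x => G (σ x)) p)) : ℤ) := by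
    rw [Finset.sum_image hposinj]
  have hfull : ∑ p ∈ S.image pos,
      (lam (ominus (G (σ p)) (unionBelow (fun x => G (σ x)) p)) : ℤ)
      ≤ ∑ p : Fin (m+1),
      (lam (ominus (G (σ p)) (unionBelow (fun x => G (σ x)) p)) : ℤ) := by
    apply Finset.sum_le_sum_of_subset_of_nonneg (Finset.subset_univ _)
    intro p _ _
    positivity
  have hlv : (lvec (seqList fun a => G (σ a)) : ℤ) = ∑ p : Fin (m+1),
      (lam (ominus (G (σ p)) (unionBelow (fun x => G (σ x)) p)) : ℤ) := by
    rw [lvec_eq_sum]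
    push_cast
    rfl
  rw [hσdef] at hlv
  calc totalC G S ≤ _ := hsum
    _ = _ := himg
    _ ≤ _ := hfull
    _ = (lvec (seqList fun a => G (sigmaFun I a)) : ℤ) := hlv.symm

lemma coreR {k m : ℕ} {G : Fin (m+1) → PGraph} (hk : 1 ≤ k)
    (hcov : Finset.univ.biUnion G = pathk k)
    {t0 : Fin (m+1)} (ht0min : ∀ i, i < t0 → G i = ∅)
    (htouch : ∀ j, j ≠ t0 → ominus (G j) (unionBelow G j) = ∅)
    {b0 : ℤ} (hb0mem : b0 ∈ G t0) (hb0max : ∀ x ∈ G t0, x ≤ b0) :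
    ∃ I : Finset (Fin (m+1)), Fin.last m ∈ I ∧
      (k:ℤ) - b0 ≤ 2 * (lvec (seqList fun a => G (sigmaFun I a)) : ℤ) := by
  classical
  have hne : ∀ j, t0 ≤ j → (UleF G j).Nonempty := by
    intro j hj
    exact ⟨b0, mem_UleF.2 ⟨t0, hj, hb0mem⟩⟩
  have hUle : ∀ a : Fin (m+1), t0 ≤ a → ∀ x ∈ UleF G a, x ≤ rEnd G a :=
    fun a _ x hx => le_maxd 0 hx
  have hUt0 : UleF G t0 = G t0 := by
    ext x
    rw [mem_UleF]
    constructor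
    · rintro ⟨i, hi, hx⟩
      rcases lt_or_eq_of_le hi with h | h
      · rw [ht0min i h] at hx
        exact absurd hx (Finset.notMem_empty x)
      · rwa [← h]
    · intro hx
      exact ⟨t0, le_refl _, hx⟩
  have hrt0 : rEnd G t0 = b0 := by
    apply le_antisymm
    · have h1 : rEnd G t0 ∈ UleF G t0 := maxd_mem 0 (hne t0 (le_refl t0))
      rw [hUt0] at h1
      exact hb0max _ h1
    · have h2 : b0 ∈ UleF G t0 := by rw [hUt0]; exact hb0mem
      exact le_maxd 0 h2
  have hUlast : UleF G (Fin.last m) = pathk k := by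
    rw [← hcov]
    ext x
    rw [mem_UleF, Finset.mem_biUnion]
    constructor
    · rintro ⟨i, _, hx⟩
      exact ⟨i, Finset.mem_univ _, hx⟩
    · rintro ⟨i, _, hx⟩
      exact ⟨i, Fin.le_last _, hx⟩
  have hkk : (k:ℤ) ∈ pathk k := by
    rw [pathk, Finset.mem_Icc]
    exact ⟨by exact_mod_cast hk, le_refl _⟩
  have hkb : ∀ x ∈ pathk k, x ≤ (k:ℤ) := by
    intro x hx
    rw [pathk, Finset.mem_Icc] at hx
    exact hx.2
  have hrlast : rEnd G (Fin.last m) = (k:ℤ) := by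
    have h1 : rEnd G (Fin.last m) ∈ UleF G (Fin.last m) := maxd_mem 0 (hne _ (Fin.le_last t0))
    rw [hUlast] at h1
    apply le_antisymm (hkb _ h1)
    have h2 : (k:ℤ) ∈ UleF G (Fin.last m) := by rw [hUlast]; exact hkk
    exact le_maxd 0 h2
  have hub : ∀ a : Fin (m+1), (a:ℕ) ≠ 0 → unionBelow G a = UleF G (predF a) := by
    intro a ha
    rw [unionBelow, UleF]
    congr 1
    ext i
    simp only [Finset.mem_filter, Finset.mem_univ, true_and, Fin.lt_def, Fin.le_def, predF]
    omega
  have hposa : ∀ a : Fin (m+1), t0 < a → (a:ℕ) ≠ 0 := by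
    intro a ha
    rw [Fin.lt_def] at ha
    omega
  have hpredt0 : ∀ a : Fin (m+1), t0 < a → t0 ≤ predF a := by
    intro a ha
    rw [Fin.lt_def] at ha
    rw [Fin.le_def]
    simp only [predF]
    omega
  have hra : ∀ a, incP G t0 a → rEnd G a ∈ G a := by
    intro a hPa
    have h1 := maxd_mem 0 (hne a (le_of_lt hPa.1))
    rw [mem_UleF] at h1
    obtain ⟨i, hi, hmem⟩ := h1
    rcases lt_or_eq_of_le hi with h | h
    · exfalso
      have h2 : rEnd G a ∈ UleF G (predF a) := by
        rw [mem_UleF]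
        refine ⟨i, ?_, hmem⟩
        rw [Fin.le_def]
        rw [Fin.lt_def] at h
        simp only [predF]
        omega
      have h3 := le_maxd (0:ℤ) h2
      exact absurd hPa.2 (not_lt.2 h3)
    · subst h
      exact hmem
  have hlmem : ∀ a, incP G t0 a → lEnd G a ∈ comp (G a) (rEnd G a) := by
    intro a hPa
    have := mind_mem (0:ℤ) (comp_nonempty (hra a hPa))
    exact this
  have hlle : ∀ a, incP G t0 a → ∀ x ∈ comp (G a) (rEnd G a), lEnd G a ≤ x := by
    intro a hPa x hx
    exact mind_le 0 hx
  have htl : ∀ a, incP G t0 a → lEnd G a ≤ rEnd G (predF a) + 1 := by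
    intro a hPa
    have hat0 : a ≠ t0 := fun h => absurd hPa.1 (h ▸ lt_irrefl t0)
    have h1 : rEnd G a ∉ ominus (G a) (unionBelow G a) := by
      rw [htouch a hat0]
      exact Finset.notMem_empty _
    rw [ominus, Finset.mem_filter] at h1
    push_neg at h1
    obtain ⟨e, he, f, hf, hef⟩ := h1 (hra a hPa)
    rw [hub a (hposa a hPa.1)] at hf
    have hfr : f ≤ rEnd G (predF a) := le_maxd 0 hf
    have hle : lEnd G a ≤ e := hlle a hPa e he
    omega
  have hIcc : ∀ a, incP G t0 a → comp (G a) (rEnd G a) = Finset.Icc (lEnd G a) (rEnd G a) := by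
    intro a hPa
    have hra' := hra a hPa
    have hmaxeq : (comp (G a) (rEnd G a)).max' (comp_nonempty hra') = rEnd G a := by
      apply le_antisymm
      · have h1 : (comp (G a) (rEnd G a)).max' (comp_nonempty hra') ∈ G a :=
          comp_subset (Finset.max'_mem _ _)
        have h2 : (comp (G a) (rEnd G a)).max' (comp_nonempty hra') ∈ UleF G a :=
          mem_UleF.2 ⟨a, le_refl _, h1⟩
        exact le_maxd 0 h2
      · exact Finset.le_max' _ _ (mem_comp_self hra')
    have hmineq : (comp (G a) (rEnd G a)).min' (comp_nonempty hra') = lEnd G a := by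
      rw [lEnd, ← Finset.coe_min' (comp_nonempty hra'), WithTop.untopD_coe]
    rw [comp_eq_Icc hra', hmaxeq, hmineq]
  obtain ⟨S1, S2, hS1P, hS2P, _, _, hS1sep, hS2sep, _, _, htot⟩ :=
    chainLemma (k := k) hne hrlast htl m t0 (le_refl t0) (by omega)
  rw [hrt0] at htot
  rcases le_total (totalC G S1) (totalC G S2) with hc | hc
  · have hcnt := countLemma hra hIcc hUle S2 hS2P hS2sep
    exact ⟨S2 ∪ {Fin.last m}, Finset.mem_union_right _ (Finset.mem_singleton_self _),
      by linarith⟩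
  · have hcnt := countLemma hra hIcc hUle S1 hS1P hS1sep
    exact ⟨S1 ∪ {Fin.last m}, Finset.mem_union_right _ (Finset.mem_singleton_self _),
      by linarith⟩

lemma biUnion_image_comm {n : ℕ} (s : Finset (Fin n)) (t : Fin n → PGraph) (c : ℤ) :
    (s.biUnion t).image (fun y => c - y) = s.biUnion (fun a => (t a).image (fun y => c - y)) := by
  ext x
  rw [rmem, Finset.mem_biUnion, Finset.mem_biUnion]
  constructor
  · rintro ⟨a, ha, h⟩
    exact ⟨a, ha, rmem.2 h⟩
  · rintro ⟨a, ha, h⟩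
    exact ⟨a, ha, rmem.1 h⟩

lemma pathk_image {k : ℕ} (hk : 1 ≤ k) :
    (pathk k).image (fun y => ((k:ℤ)+1) - y) = pathk k := by
  ext x
  rw [rmem, pathk, Finset.mem_Icc, Finset.mem_Icc]
  omega

/-- **Lemma 5.7 (stronger Pre-Main Lemma (II)).**  If `G_1 ∪ ⋯ ∪ G_m = Path_k` and
`Δ⃗(G_1,…,G_m) = 1`, then there is a set `I` of indices containing the last one, with
associated shift permutation `σ = σ_I` and induced shift permutations `σ̃_j`, such that
`λ⃗(G_{σ(1)},…,G_{σ(m)}) ≥ k/8 − (max_j λ(G_j))/2`, and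
`Δ⃗(G_{σ̃_j(1)},…,G_{σ̃_j(m)}) ≥ Δ⃗(G_1,…,G_m)/2` for all `j`. -/
theorem stronger_pre_main_lemma_II (k m : ℕ) (hk : 1 ≤ k) (G : Fin (m + 1) → PGraph)
    (hcov : Finset.univ.biUnion G = pathk k)
    (hdvec : dvec (seqList G) = 1) :
    ∃ I : Finset (Fin (m + 1)), Fin.last m ∈ I ∧
      ((k : ℝ) / 8 - (((Finset.univ.sup fun j => lam (G j)) : ℕ) : ℝ) / 2 ≤
        (lvec (seqList fun a => G (sigmaFun I a)) : ℝ)) ∧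
      (∀ j : Fin (m + 1),
        (dvec (seqList G) : ℝ) / 2 ≤ (dvec (seqList fun a => G (sigmaTilde I j a)) : ℝ)) := by
  classical
  set L := Finset.univ.sup fun j => lam (G j) with hLdef
  -- find t0
  have hone : (1:ℤ) ∈ pathk k := by
    rw [pathk, Finset.mem_Icc]
    exact ⟨le_refl _, by exact_mod_cast hk⟩
  have hex : ∃ i, G i ≠ ∅ := by
    rw [← hcov] at hone
    rw [Finset.mem_biUnion] at hone
    obtain ⟨i, -, hi⟩ := hone
    exact ⟨i, fun h => by rw [h] at hi; exact absurd hi (Finset.notMem_empty _)⟩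
  have hTne : (Finset.univ.filter fun j => G j ≠ ∅).Nonempty := by
    obtain ⟨i, hi⟩ := hex
    exact ⟨i, Finset.mem_filter.2 ⟨Finset.mem_univ _, hi⟩⟩
  set t0 := (Finset.univ.filter fun j => G j ≠ ∅).min' hTne with ht0def
  have ht0mem := Finset.min'_mem _ hTne
  rw [Finset.mem_filter] at ht0mem
  have ht0ne : G t0 ≠ ∅ := ht0mem.2
  have ht0min : ∀ i, i < t0 → G i = ∅ := by
    intro i hi
    by_contra hc
    have h5 := Finset.min'_le (Finset.univ.filter fun j => G j ≠ ∅) i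
      (Finset.mem_filter.2 ⟨Finset.mem_univ i, hc⟩)
    exact absurd h5 (not_le.2 hi)
  -- unionBelow at t0 is empty
  have hubt0 : unionBelow G t0 = ∅ := by
    rw [Finset.eq_empty_iff_forall_notMem]
    intro x hx
    rw [unionBelow, Finset.mem_biUnion] at hx
    obtain ⟨i, hi, hxi⟩ := hx
    rw [Finset.mem_filter] at hi
    rw [ht0min i hi.2] at hxi
    exact absurd hxi (Finset.notMem_empty _)
  -- per-index Delta facts
  have hsum : ∑ j, Delta (ominus (G j) (unionBelow G j)) = 1 := by
    rw [← dvec_eq_sum]; exact hdvec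
  have ht0pos : 1 ≤ Delta (ominus (G t0) (unionBelow G t0)) := by
    rw [hubt0, ominus_empty]
    exact Delta_pos (Finset.nonempty_iff_ne_empty.2 ht0ne)
  have hsplit : Delta (ominus (G t0) (unionBelow G t0)) +
      ∑ j ∈ Finset.univ.erase t0, Delta (ominus (G j) (unionBelow G j))
      = ∑ j, Delta (ominus (G j) (unionBelow G j)) :=
    Finset.add_sum_erase Finset.univ (fun j => Delta (ominus (G j) (unionBelow G j)))
      (Finset.mem_univ t0)
  have herase : ∑ j ∈ Finset.univ.erase t0, Delta (ominus (G j) (unionBelow G j)) = 0 := by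
    omega
  have hd1 : Delta (ominus (G t0) (unionBelow G t0)) = 1 := by omega
  have htouch : ∀ j, j ≠ t0 → ominus (G j) (unionBelow G j) = ∅ := by
    intro j hj
    rw [← Delta_eq_zero_iff]
    exact (Finset.sum_eq_zero_iff).1 herase j (Finset.mem_erase.2 ⟨hj, Finset.mem_univ _⟩)
  -- G t0 is an interval
  have ht0nee : (G t0).Nonempty := Finset.nonempty_iff_ne_empty.2 ht0ne
  have hDt0 : Delta (G t0) = 1 := by
    rw [hubt0, ominus_empty] at hd1
    exact hd1
  set a0 := (G t0).min' ht0nee with ha0def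
  set b0 := (G t0).max' ht0nee with hb0def
  have hIcc0 : G t0 = Finset.Icc a0 b0 := Delta_one_Icc ht0nee hDt0
  have ha0b0 : a0 ≤ b0 := Finset.min'_le _ _ (Finset.max'_mem _ _)
  -- card bound via lam
  have hcardL : b0 - a0 + 1 ≤ (L:ℤ) := by
    have h1 : comp (G t0) a0 = G t0 := by
      apply Finset.Subset.antisymm comp_subset
      rw [hIcc0]
      apply Icc_subset_comp (by rw [← hIcc0])
      rw [Finset.mem_Icc]
      exact ⟨le_refl _, ha0b0⟩
    have h2 : (G t0).card ≤ lam (G t0) := by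
      have := card_comp_le_lam (Finset.min'_mem _ ht0nee)
      rwa [h1] at this
    have h3 : lam (G t0) ≤ L := Finset.le_sup (f := fun j => lam (G j)) (Finset.mem_univ t0)
    have h4 : ((G t0).card : ℤ) = b0 - a0 + 1 := by
      rw [hIcc0, Int.card_Icc]
      omega
    omega
  -- pathk bounds for a0 b0
  have hsubP : G t0 ⊆ pathk k := by
    rw [← hcov]
    exact Finset.subset_biUnion_of_mem G (Finset.mem_univ t0)
  have ha0P : a0 ∈ pathk k := hsubP (Finset.min'_mem _ _)
  have hb0P : b0 ∈ pathk k := hsubP (Finset.max'_mem _ _)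
  rw [pathk, Finset.mem_Icc] at ha0P hb0P
  -- the dvec part holds for any I containing last
  have hdvecpart : ∀ I : Finset (Fin (m+1)), Fin.last m ∈ I → ∀ j : Fin (m + 1),
      (dvec (seqList G) : ℝ) / 2 ≤ (dvec (seqList fun a => G (sigmaTilde I j a)) : ℝ) := by
    intro I hlast j
    have h1 := one_le_dvec_tilde G I hlast hex j
    rw [hdvec]
    have h2 : (1:ℝ) ≤ (dvec (seqList fun a => G (sigmaTilde I j a)) : ℝ) := by
      exact_mod_cast h1
    linarith
  -- side split
  by_cases hside : (k:ℤ) - (L:ℤ) ≤ 2*((k:ℤ) - b0)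
  · -- right side: use G directly
    obtain ⟨I, hlast, hineq⟩ := coreR hk hcov ht0min htouch (Finset.max'_mem _ ht0nee)
      (fun x hx => Finset.le_max' _ _ hx)
    refine ⟨I, hlast, ?_, hdvecpart I hlast⟩
    have h1 : (k:ℤ) - (L:ℤ) ≤ 4 * (lvec (seqList fun a => G (sigmaFun I a)) : ℤ) := by omega
    have h2 : (k:ℝ) - (L:ℝ) ≤ 4 * (lvec (seqList fun a => G (sigmaFun I a)) : ℝ) := by
      exact_mod_cast h1
    have hL0 : (0:ℝ) ≤ (L:ℝ) := Nat.cast_nonneg _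
    have hk0 : (0:ℝ) ≤ (k:ℝ) := Nat.cast_nonneg _
    linarith
  · -- left side: reflect
    push_neg at hside
    set c : ℤ := (k:ℤ) + 1 with hcdef
    set G' : Fin (m+1) → PGraph := fun j => (G j).image (fun y => c - y) with hG'def
    have hcov' : Finset.univ.biUnion G' = pathk k := by
      rw [hG'def, ← biUnion_image_comm, hcov, hcdef]
      exact pathk_image hk
    have ht0min' : ∀ i, i < t0 → G' i = ∅ := by
      intro i hi
      rw [hG'def]
      simp only [ht0min i hi, Finset.image_empty]
    have hub' : ∀ j, unionBelow G' j = (unionBelow G j).image (fun y => c - y) := by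
      intro j
      rw [unionBelow, unionBelow, hG'def, biUnion_image_comm]
    have htouch' : ∀ j, j ≠ t0 → ominus (G' j) (unionBelow G' j) = ∅ := by
      intro j hj
      rw [hub', hG'def]
      rw [ominus_image, htouch j hj, Finset.image_empty]
    have hb0mem' : c - a0 ∈ G' t0 := by
      rw [hG'def]
      apply rmem.2
      have : c - (c - a0) = a0 := by ring
      rw [this]
      exact Finset.min'_mem _ _
    have hb0max' : ∀ x ∈ G' t0, x ≤ c - a0 := by
      intro x hx
      rw [hG'def, rmem] at hx
      have := Finset.min'_le _ _ hx
      omega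
    obtain ⟨I, hlast, hineq⟩ := coreR hk hcov' ht0min' htouch' hb0mem' hb0max'
    have hlveq : lvec (seqList fun a => G' (sigmaFun I a))
        = lvec (seqList fun a => G (sigmaFun I a)) := by
      have h1 : (seqList fun a => G' (sigmaFun I a))
          = (seqList fun a => G (sigmaFun I a)).map (fun A => A.image fun y => c - y) := by
        rw [seqList, seqList, List.map_map]
        rfl
      rw [h1, lvec_image]
    rw [hlveq] at hineq
    refine ⟨I, hlast, ?_, hdvecpart I hlast⟩
    -- k - (c - a0) = a0 - 1 ; 2*(a0-1) ≥ k - L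
    have hh : (k:ℤ) - (c - a0) = a0 - 1 := by rw [hcdef]; ring
    rw [hh] at hineq
    have h1 : (k:ℤ) - (L:ℤ) ≤ 4 * (lvec (seqList fun a => G (sigmaFun I a)) : ℤ) := by omega
    have h2 : (k:ℝ) - (L:ℝ) ≤ 4 * (lvec (seqList fun a => G (sigmaFun I a)) : ℝ) := by
      exact_mod_cast h1
    have hL0 : (0:ℝ) ≤ (L:ℝ) := Nat.cast_nonneg _
    have hk0 : (0:ℝ) ≤ (k:ℝ) := Nat.cast_nonneg _
    linarith
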